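/- arXiv:1903.06286 — 9 statements merged into one kernel-verified Lean document; each statement's English description precedes it below -/
import Mathlib

section
/- Let (α̂, τ̂′, β̂′) ∈ ℝ³ be a global minimizer over (a, c, b) ∈ ℝ³ of the least-squares objective Σ_{i=1}^{n} (y'_i − a − c·g_i − b·y_i)², fitted on all units. Then τ̂′ = (Ȳ_{1,t+1} − Ȳ_{0,t+1}) − β̂′·(Ȳ_{1,t} − Ȳ_{0,t}). -/
/-- First-order condition: if `∑ r i ^ 2 ≤ ∑ (r i - t * v i)^2` for all `t`,
then `∑ r i * v i = 0`. -/
lemma foc_aux {n : ℕ} (r v : Fin n → ℝ)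
    (hv : ∀ t : ℝ, ∑ i, r i ^ 2 ≤ ∑ i, (r i - t * v i) ^ 2) :
    ∑ i, r i * v i = 0 := by
  by_contra hL
  set L := ∑ i, r i * v i with hLdef
  set Q := ∑ i, v i ^ 2 with hQdef
  have hQ : 0 ≤ Q := Finset.sum_nonneg fun i _ => sq_nonneg _
  have hQ1 : (0:ℝ) < Q + 1 := by linarith
  have hexp : ∀ t : ℝ, ∑ i, (r i - t * v i) ^ 2
      = ∑ i, r i ^ 2 - 2 * t * L + t ^ 2 * Q := by
    intro t
    rw [hLdef, hQdef, Finset.mul_sum, Finset.mul_sum, ← Finset.sum_sub_distrib,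
      ← Finset.sum_add_distrib]
    apply Finset.sum_congr rfl
    intro i _
    ring
  have h := hv (L / (Q + 1))
  rw [hexp] at h
  have h2 : 0 ≤ -2 * (L / (Q + 1)) * L + (L / (Q + 1)) ^ 2 * Q := by linarith
  have hL2 : 0 < L ^ 2 := by positivity
  have hd : (0:ℝ) < (Q + 1) ^ 2 := by positivity
  have key : -2 * (L / (Q + 1)) * L + (L / (Q + 1)) ^ 2 * Q
      = L ^ 2 * (Q - 2 * (Q + 1)) / (Q + 1) ^ 2 := by
    field_simp
    ring
  rw [key] at h2
  have h3 : 0 ≤ L ^ 2 * (Q - 2 * (Q + 1)) := by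
    have h4 := mul_le_mul_of_nonneg_left h2 hd.le
    rwa [mul_zero, mul_div_cancel₀ _ (ne_of_gt hd)] at h4
  nlinarith [mul_pos hL2 (show (0:ℝ) < Q + 2 by linarith)]

/-- Proposition 1 (second estimator): if `(α̂, τ̂′, β̂′)` globally minimizes the
least-squares objective `∑_i (y'ᵢ − a − c·gᵢ − b·yᵢ)²` over all units, then
`τ̂′ = (Ȳ₁ₜ₊₁ − Ȳ₀ₜ₊₁) − β̂′ (Ȳ₁ₜ − Ȳ₀ₜ)`. -/
theorem ldv_full_fit_estimator {n : ℕ} (g : Fin n → ℝ) (hg : ∀ i, g i = 0 ∨ g i = 1)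
    (h1 : ∃ i, g i = 1) (h0 : ∃ i, g i = 0)
    (y y' : Fin n → ℝ) (αhat τhat βhat : ℝ)
    (hmin : ∀ a c b : ℝ,
      ∑ i, (y' i - αhat - τhat * g i - βhat * y i) ^ 2 ≤
        ∑ i, (y' i - a - c * g i - b * y i) ^ 2)
    (Y1t Y1t1 Y0t Y0t1 : ℝ)
    (hY1t : Y1t = (∑ i ∈ Finset.univ.filter (fun i => g i = 1), y i) /
      (Finset.univ.filter (fun i => g i = 1)).card)
    (hY1t1 : Y1t1 = (∑ i ∈ Finset.univ.filter (fun i => g i = 1), y' i) /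
      (Finset.univ.filter (fun i => g i = 1)).card)
    (hY0t : Y0t = (∑ i ∈ Finset.univ.filter (fun i => g i = 0), y i) /
      (Finset.univ.filter (fun i => g i = 0)).card)
    (hY0t1 : Y0t1 = (∑ i ∈ Finset.univ.filter (fun i => g i = 0), y' i) /
      (Finset.univ.filter (fun i => g i = 0)).card) :
    τhat = (Y1t1 - Y0t1) - βhat * (Y1t - Y0t) := by
  classical
  set r : Fin n → ℝ := fun i => y' i - αhat - τhat * g i - βhat * y i with hr
  -- FOC for intercept direction
  have e1 : ∑ i, r i = 0 := by
    have key := foc_aux r (fun _ => 1) ?_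
    · simpa using key
    · intro t
      calc ∑ i, r i ^ 2 = ∑ i, (y' i - αhat - τhat * g i - βhat * y i) ^ 2 := rfl
        _ ≤ ∑ i, (y' i - (αhat + t) - τhat * g i - βhat * y i) ^ 2 :=
            hmin (αhat + t) τhat βhat
        _ = ∑ i, (r i - t * (fun _ => (1:ℝ)) i) ^ 2 :=
            Finset.sum_congr rfl fun i _ => by simp only [hr]; ring
  -- FOC for treatment direction
  have e2 : ∑ i, r i * g i = 0 := by
    apply foc_aux r g
    intro t
    calc ∑ i, r i ^ 2 = ∑ i, (y' i - αhat - τhat * g i - βhat * y i) ^ 2 := rfl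
      _ ≤ ∑ i, (y' i - αhat - (τhat + t) * g i - βhat * y i) ^ 2 :=
          hmin αhat (τhat + t) βhat
      _ = ∑ i, (r i - t * g i) ^ 2 :=
          Finset.sum_congr rfl fun i _ => by simp only [hr]; ring
  set S1 := Finset.univ.filter (fun i => g i = 1) with hS1
  set S0 := Finset.univ.filter (fun i => g i = 0) with hS0
  have hS1ne : S1.Nonempty := by
    obtain ⟨i, hi⟩ := h1
    exact ⟨i, by simp [hS1, hi]⟩
  have hS0ne : S0.Nonempty := by
    obtain ⟨i, hi⟩ := h0
    exact ⟨i, by simp [hS0, hi]⟩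
  have hn1 : (0:ℝ) < (S1.card : ℝ) := by
    exact_mod_cast Finset.card_pos.mpr hS1ne
  have hn0 : (0:ℝ) < (S0.card : ℝ) := by
    exact_mod_cast Finset.card_pos.mpr hS0ne
  -- sum of residuals over treated group
  have hsum1 : ∑ i ∈ S1, r i = ∑ i, r i * g i := by
    rw [hS1, Finset.sum_filter]
    apply Finset.sum_congr rfl
    intro i _
    rcases hg i with h | h <;> simp [h]
  have hsum1' : ∑ i ∈ S1, r i = 0 := by rw [hsum1]; exact e2
  -- sum over control group
  have hsplit : ∑ i ∈ S1, r i + ∑ i ∈ S0, r i = ∑ i, r i := by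
    rw [hS1, hS0, Finset.sum_filter, Finset.sum_filter, ← Finset.sum_add_distrib]
    apply Finset.sum_congr rfl
    intro i _
    rcases hg i with h | h <;> simp [h]
  have hsum0' : ∑ i ∈ S0, r i = 0 := by
    have := hsplit
    rw [hsum1', e1] at this
    linarith
  -- expand the group sums
  have hexp1 : ∑ i ∈ S1, r i
      = (∑ i ∈ S1, y' i) - (S1.card : ℝ) * αhat - (S1.card : ℝ) * τhat
        - βhat * (∑ i ∈ S1, y i) := by
    rw [hr]
    rw [show (∑ i ∈ S1, (y' i - αhat - τhat * g i - βhat * y i))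
        = ∑ i ∈ S1, (y' i - αhat - τhat - βhat * y i) from
      Finset.sum_congr rfl fun i hi => by
        have : g i = 1 := (Finset.mem_filter.mp hi).2
        rw [this]; ring]
    simp [Finset.sum_sub_distrib, Finset.mul_sum, Finset.sum_const]
    try ring
  have hexp0 : ∑ i ∈ S0, r i
      = (∑ i ∈ S0, y' i) - (S0.card : ℝ) * αhat - βhat * (∑ i ∈ S0, y i) := by
    rw [hr]
    rw [show (∑ i ∈ S0, (y' i - αhat - τhat * g i - βhat * y i))
        = ∑ i ∈ S0, (y' i - αhat - βhat * y i) from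
      Finset.sum_congr rfl fun i hi => by
        have : g i = 0 := (Finset.mem_filter.mp hi).2
        rw [this]; ring]
    simp [Finset.sum_sub_distrib, Finset.mul_sum, Finset.sum_const]
    try ring
  -- means times cardinalities
  have hy1 : ∑ i ∈ S1, y i = Y1t * (S1.card : ℝ) := by
    rw [hY1t]; field_simp
  have hy1' : ∑ i ∈ S1, y' i = Y1t1 * (S1.card : ℝ) := by
    rw [hY1t1]; field_simp
  have hy0 : ∑ i ∈ S0, y i = Y0t * (S0.card : ℝ) := by
    rw [hY0t, div_mul_cancel₀ _ (ne_of_gt hn0)]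
  have hy0' : ∑ i ∈ S0, y' i = Y0t1 * (S0.card : ℝ) := by
    rw [hY0t1, div_mul_cancel₀ _ (ne_of_gt hn0)]
  have eq1 : (S1.card : ℝ) * (Y1t1 - αhat - τhat - βhat * Y1t) = 0 := by
    rw [hexp1, hy1, hy1'] at hsum1'
    linarith [hsum1']
  have eq0 : (S0.card : ℝ) * (Y0t1 - αhat - βhat * Y0t) = 0 := by
    rw [hexp0, hy0, hy0'] at hsum0'
    linarith [hsum0']
  have eq1' : Y1t1 - αhat - τhat - βhat * Y1t = 0 := by
    rcases mul_eq_zero.mp eq1 with h | h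
    · exact absurd h (ne_of_gt hn1)
    · exact h
  have eq0' : Y0t1 - αhat - βhat * Y0t = 0 := by
    rcases mul_eq_zero.mp eq0 with h | h
    · exact absurd h (ne_of_gt hn0)
    · exact h
  linarith [eq1', eq0']
end

section
/- Let (α̂, β̂) ∈ ℝ² be a global minimizer over (a, b) ∈ ℝ² of the least-squares objective Σ_{i ∈ I₀} (y'_i − a − b·y_i)² fitted on the control-group data, and define τ̂_LDV := Ȳ_{1,t+1} − (α̂ + β̂·Ȳ_{1,t}) and τ̂_DID := (Ȳ_{1,t+1} − Ȳ_{0,t+1}) − (Ȳ_{1,t} − Ȳ_{0,t}). If β̂ < 1, then: (i) if Ȳ_{1,t} < Ȳ_{0,t} then τ̂_DID > τ̂_LDV; (ii) if Ȳ_{1,t} > Ȳ_{0,t} then τ̂_DID < τ̂_LDV; and (iii) if β̂ = 1 (instead of β̂ < 1) then τ̂_DID = τ̂_LDV. -/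
/-- Sample-level bracketing: with `(α̂, β̂)` the OLS fit on the control group,
`τ̂_LDV = Ȳ₁ₜ₊₁ − (α̂ + β̂ Ȳ₁ₜ)` and `τ̂_DID = (Ȳ₁ₜ₊₁ − Ȳ₀ₜ₊₁) − (Ȳ₁ₜ − Ȳ₀ₜ)`:
if `β̂ < 1` and `Ȳ₁ₜ < Ȳ₀ₜ` then `τ̂_DID > τ̂_LDV`; if `β̂ < 1` and `Ȳ₁ₜ > Ȳ₀ₜ`
then `τ̂_DID < τ̂_LDV`; and if `β̂ = 1` then `τ̂_DID = τ̂_LDV`. -/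
theorem bracketing_sample {ι : Type*} (I₀ I₁ : Finset ι)
    (hI₀ : I₀.Nonempty) (hI₁ : I₁.Nonempty)
    (y y' : ι → ℝ) (αhat βhat : ℝ)
    (hmin : ∀ a b : ℝ,
      ∑ i ∈ I₀, (y' i - αhat - βhat * y i) ^ 2 ≤ ∑ i ∈ I₀, (y' i - a - b * y i) ^ 2)
    (Y1t Y1t1 Y0t Y0t1 τLDV τDID : ℝ)
    (hY1t : Y1t = (∑ i ∈ I₁, y i) / I₁.card)
    (hY1t1 : Y1t1 = (∑ i ∈ I₁, y' i) / I₁.card)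
    (hY0t : Y0t = (∑ i ∈ I₀, y i) / I₀.card)
    (hY0t1 : Y0t1 = (∑ i ∈ I₀, y' i) / I₀.card)
    (hLDV : τLDV = Y1t1 - (αhat + βhat * Y1t))
    (hDID : τDID = (Y1t1 - Y0t1) - (Y1t - Y0t)) :
    (βhat < 1 → Y1t < Y0t → τDID > τLDV) ∧
    (βhat < 1 → Y1t > Y0t → τDID < τLDV) ∧
    (βhat = 1 → τDID = τLDV) := by

  have hn : (0:ℝ) < I₀.card := by exact_mod_cast Finset.card_pos.mpr hI₀
  set n : ℝ := (I₀.card : ℝ) with hndef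
  set S := ∑ i ∈ I₀, (y' i - αhat - βhat * y i) with hS
  -- residuals sum to zero
  have hS0 : S = 0 := by
    have h := hmin (αhat + S / n) βhat
    have hexp : ∑ i ∈ I₀, (y' i - (αhat + S / n) - βhat * y i) ^ 2
        = ∑ i ∈ I₀, (y' i - αhat - βhat * y i) ^ 2 - 2 * (S / n) * S + n * (S / n) ^ 2 := by
      have : ∀ i ∈ I₀, (y' i - (αhat + S / n) - βhat * y i) ^ 2
          = (y' i - αhat - βhat * y i) ^ 2 - 2 * (S / n) * (y' i - αhat - βhat * y i)
            + (S / n) ^ 2 := by intro i _; ring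
      rw [Finset.sum_congr rfl this]
      rw [Finset.sum_add_distrib, Finset.sum_sub_distrib, ← Finset.mul_sum, ← hS,
        Finset.sum_const, nsmul_eq_mul, ← hndef]
    rw [hexp] at h
    have : n * (S / n) ^ 2 - 2 * (S / n) * S ≥ 0 := by linarith
    have h2 : n * (S / n) ^ 2 = S ^ 2 / n := by field_simp
    have h3 : 2 * (S / n) * S = 2 * (S ^ 2 / n) := by field_simp
    rw [h2, h3] at this
    have h4 : S ^ 2 / n ≤ 0 := by linarith
    have h5 : S ^ 2 ≤ 0 := by
      by_contra hc
      push_neg at hc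
      exact absurd h4 (not_le.mpr (div_pos hc hn))
    have h6 : S ^ 2 = 0 := le_antisymm h5 (sq_nonneg S)
    exact pow_eq_zero_iff (two_ne_zero) |>.mp h6
  -- hence Y0t1 = αhat + βhat * Y0t
  have hkey : Y0t1 = αhat + βhat * Y0t := by
    have hsum : ∑ i ∈ I₀, y' i = n * αhat + βhat * ∑ i ∈ I₀, y i := by
      have : S = ∑ i ∈ I₀, y' i - n * αhat - βhat * ∑ i ∈ I₀, y i := by
        rw [hS, Finset.sum_sub_distrib, Finset.sum_sub_distrib, Finset.sum_const,
          nsmul_eq_mul, ← Finset.mul_sum, hndef]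
      rw [this] at hS0; linarith
    rw [hY0t1, hY0t, hsum]
    have hn' : n ≠ 0 := ne_of_gt hn
    field_simp
  have hdiff : τDID - τLDV = (βhat - 1) * (Y1t - Y0t) := by
    rw [hDID, hLDV, hkey]; ring
  refine ⟨fun hβ hlt => ?_, fun hβ hgt => ?_, fun hβ => ?_⟩
  · nlinarith
  · nlinarith
  · rw [hβ] at hdiff; linarith
end

section
/- Suppose m is differentiable with derivative m′(y) < 1 for all y ∈ ℝ (Stationarity), and ν₁((−∞, y]) ≥ ν₀((−∞, y]) for all y ∈ ℝ (Stochastic Monotonicity, version (a)). Then μ_DID ≤ μ_LDV; consequently, for any real number μ₁ (the mean treated outcome E(Y_{t+1} | G = 1)), the estimands τ_DID := μ₁ − μ_DID and τ_LDV := μ₁ − μ_LDV satisfy τ_DID ≥ τ_LDV. -/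
open MeasureTheory Set

/-- A lower set in `ℝ` has `ν₀`-measure at most `ν₁`-measure, given CDF dominance. -/
lemma lower_meas_le (ν₀ ν₁ : Measure ℝ)
    [IsProbabilityMeasure ν₀] [IsProbabilityMeasure ν₁]
    (hmono : ∀ y : ℝ, ν₀ (Set.Iic y) ≤ ν₁ (Set.Iic y))
    {s : Set ℝ} (hs : IsLowerSet s) : ν₀ s ≤ ν₁ s := by
  rcases s.eq_empty_or_nonempty with rfl | hne
  · simp
  by_cases hbdd : BddAbove s
  · set c := sSup s with hc
    have hsub : s ⊆ Set.Iic c := fun x hx => le_csSup hbdd hx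
    by_cases hcs : c ∈ s
    · have : s = Set.Iic c := Subset.antisymm hsub (fun x hx => hs hx hcs)
      rw [this]; exact hmono c
    · have hIio : s = Set.Iio c := by
        apply Subset.antisymm
        · intro x hx
          have hle : x ≤ c := hsub hx
          exact lt_of_le_of_ne hle (fun h : x = c => hcs (h ▸ hx))
        · intro x hx
          obtain ⟨y, hy, hxy⟩ := exists_lt_of_lt_csSup hne hx
          exact hs hxy.le hy
      have hunion : Set.Iio c = ⋃ n : ℕ, Set.Iic (c - (n + 1 : ℝ)⁻¹) := by
        ext x
        simp only [Set.mem_Iio, Set.mem_iUnion, Set.mem_Iic]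
        constructor
        · intro hx
          obtain ⟨n, hn⟩ := exists_nat_one_div_lt (sub_pos.mpr hx)
          refine ⟨n, ?_⟩
          rw [one_div] at hn
          linarith
        · rintro ⟨n, hn⟩
          have : (0:ℝ) < ((n:ℝ) + 1)⁻¹ := by positivity
          linarith
      have hdir : ∀ (ν : Measure ℝ), ν (Set.Iio c) = ⨆ n : ℕ, ν (Set.Iic (c - (n + 1 : ℝ)⁻¹)) := by
        intro ν
        rw [hunion]
        apply Directed.measure_iUnion
        intro i j
        rcases le_total i j with h | h
        · exact ⟨j, by
            intro x hx
            simp only [Set.mem_Iic] at *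
            have : ((j:ℝ)+1)⁻¹ ≤ ((i:ℝ)+1)⁻¹ := by
              apply inv_anti₀ (by positivity)
              have := (Nat.cast_le (α := ℝ)).mpr h; linarith
            linarith, le_refl _⟩
        · exact ⟨i, le_refl _, by
            intro x hx
            simp only [Set.mem_Iic] at *
            have : ((i:ℝ)+1)⁻¹ ≤ ((j:ℝ)+1)⁻¹ := by
              apply inv_anti₀ (by positivity)
              have := (Nat.cast_le (α := ℝ)).mpr h; linarith
            linarith⟩
      rw [hIio, hdir ν₀, hdir ν₁]
      exact iSup_mono fun n => hmono _
  · have : s = Set.univ := by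
      ext x
      simp only [Set.mem_univ, iff_true]
      obtain ⟨y, hy, hxy⟩ := not_bddAbove_iff.mp hbdd x
      exact hs hxy.le hy
    rw [this]
    simp

lemma upper_meas_le (ν₀ ν₁ : Measure ℝ)
    [IsProbabilityMeasure ν₀] [IsProbabilityMeasure ν₁]
    (hmono : ∀ y : ℝ, ν₀ (Set.Iic y) ≤ ν₁ (Set.Iic y))
    {s : Set ℝ} (hs : IsUpperSet s) (hms : MeasurableSet s) : ν₁ s ≤ ν₀ s := by
  have h₀ : ν₀ s = 1 - ν₀ sᶜ := by
    rw [measure_compl hms (measure_ne_top _ _), measure_univ]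
    rw [ENNReal.sub_sub_cancel (by norm_num) (prob_le_one)]
  have h₁ : ν₁ s = 1 - ν₁ sᶜ := by
    rw [measure_compl hms (measure_ne_top _ _), measure_univ]
    rw [ENNReal.sub_sub_cancel (by norm_num) (prob_le_one)]
  rw [h₀, h₁]
  exact tsub_le_tsub_left (lower_meas_le ν₀ ν₁ hmono hs.compl) 1

/-- Theorem 1, case (a): under Stationarity (`m` differentiable with `m′ < 1`) and
Stochastic Monotonicity (a) (`ν₁((−∞,y]) ≥ ν₀((−∞,y])`), the counterfactual means
satisfy `μ_DID ≤ μ_LDV`, hence `τ_DID ≥ τ_LDV` for any treated mean `μ₁`. -/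
theorem bracketing_nonparametric_a (ν₀ ν₁ : Measure ℝ)
    [IsProbabilityMeasure ν₀] [IsProbabilityMeasure ν₁]
    (m : ℝ → ℝ) (hdiff : Differentiable ℝ m) (hderiv : ∀ y : ℝ, deriv m y < 1)
    (hid₀ : Integrable (fun y : ℝ => y) ν₀) (hid₁ : Integrable (fun y : ℝ => y) ν₁)
    (hm₀ : Integrable m ν₀) (hm₁ : Integrable m ν₁)
    (hmono : ∀ y : ℝ, ν₀ (Set.Iic y) ≤ ν₁ (Set.Iic y))
    (μDID μLDV : ℝ)
    (hDID : μDID = (∫ y, y ∂ν₁) + (∫ y, m y ∂ν₀) - (∫ y, y ∂ν₀))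
    (hLDV : μLDV = ∫ y, m y ∂ν₁) :
    μDID ≤ μLDV ∧ ∀ μ₁ : ℝ, μ₁ - μDID ≥ μ₁ - μLDV := by
  set f : ℝ → ℝ := fun y => m y - y with hf
  have hfdiff : Differentiable ℝ f := hdiff.sub differentiable_id
  have hfanti : Antitone f := by
    have : StrictAnti f := strictAnti_of_deriv_neg (fun x => by
      have : deriv f x = deriv m x - 1 := by
        have := ((hdiff x).hasDerivAt.sub (hasDerivAt_id x)).deriv
        exact this
      rw [this]; linarith [hderiv x])
    exact this.antitone
  have hfcont : Continuous f := hfdiff.continuous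
  set g : ℝ → ℝ := fun y => max (f y) 0 with hg
  set h : ℝ → ℝ := fun y => max (-f y) 0 with hh
  have hg_nn : ∀ ν : Measure ℝ, 0 ≤ᵐ[ν] g := fun ν => Filter.Eventually.of_forall (fun y => le_max_right _ _)
  have hh_nn : ∀ ν : Measure ℝ, 0 ≤ᵐ[ν] h := fun ν => Filter.Eventually.of_forall (fun y => le_max_right _ _)
  have hg_meas : Measurable g := (hfcont.max continuous_const).measurable
  have hh_meas : Measurable h := ((hfcont.neg).max continuous_const).measurable
  -- positive part comparison
  have hgle : ∫⁻ ω, ENNReal.ofReal (g ω) ∂ν₀ ≤ ∫⁻ ω, ENNReal.ofReal (g ω) ∂ν₁ := by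
    rw [lintegral_eq_lintegral_meas_lt ν₀ (hg_nn ν₀) hg_meas.aemeasurable,
        lintegral_eq_lintegral_meas_lt ν₁ (hg_nn ν₁) hg_meas.aemeasurable]
    apply lintegral_mono
    intro t
    apply lower_meas_le ν₀ ν₁ hmono
    intro a b hba ha
    exact lt_of_lt_of_le ha (max_le_max (hfanti hba) le_rfl)
  have hhle : ∫⁻ ω, ENNReal.ofReal (h ω) ∂ν₁ ≤ ∫⁻ ω, ENNReal.ofReal (h ω) ∂ν₀ := by
    rw [lintegral_eq_lintegral_meas_lt ν₀ (hh_nn ν₀) hh_meas.aemeasurable,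
        lintegral_eq_lintegral_meas_lt ν₁ (hh_nn ν₁) hh_meas.aemeasurable]
    apply lintegral_mono
    intro t
    apply upper_meas_le ν₀ ν₁ hmono
    · intro a b hab ha
      exact lt_of_lt_of_le ha (max_le_max (neg_le_neg (hfanti hab)) le_rfl)
    · exact measurableSet_lt measurable_const hh_meas
  -- integrability
  have hf₀ : Integrable f ν₀ := hm₀.sub hid₀
  have hf₁ : Integrable f ν₁ := hm₁.sub hid₁
  have hg₀ : Integrable g ν₀ := hf₀.pos_part
  have hg₁ : Integrable g ν₁ := hf₁.pos_part
  have hh₀ : Integrable h ν₀ := hf₀.neg.pos_part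
  have hh₁ : Integrable h ν₁ := hf₁.neg.pos_part
  -- convert lintegral inequalities to integral inequalities
  have hgint : ∫ y, g y ∂ν₀ ≤ ∫ y, g y ∂ν₁ := by
    rw [integral_eq_lintegral_of_nonneg_ae (hg_nn ν₀) hg₀.aestronglyMeasurable,
        integral_eq_lintegral_of_nonneg_ae (hg_nn ν₁) hg₁.aestronglyMeasurable]
    exact ENNReal.toReal_mono (hg₁.lintegral_lt_top).ne hgle
  have hhint : ∫ y, h y ∂ν₁ ≤ ∫ y, h y ∂ν₀ := by
    rw [integral_eq_lintegral_of_nonneg_ae (hh_nn ν₀) hh₀.aestronglyMeasurable,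
        integral_eq_lintegral_of_nonneg_ae (hh_nn ν₁) hh₁.aestronglyMeasurable]
    exact ENNReal.toReal_mono (hh₀.lintegral_lt_top).ne hhle
  -- f = g - h
  have hfgh : ∀ y, f y = g y - h y := fun y => (max_zero_sub_max_neg_zero_eq_self (f y)).symm
  have hf_int : ∀ (ν : Measure ℝ), Integrable g ν → Integrable h ν →
      ∫ y, f y ∂ν = (∫ y, g y ∂ν) - ∫ y, h y ∂ν := by
    intro ν hgν hhν
    rw [← integral_sub hgν hhν]
    exact integral_congr_ae (Filter.Eventually.of_forall (fun y => hfgh y))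
  have hfle : ∫ y, f y ∂ν₀ ≤ ∫ y, f y ∂ν₁ := by
    rw [hf_int ν₀ hg₀ hh₀, hf_int ν₁ hg₁ hh₁]
    linarith
  have hsplit₀ : ∫ y, f y ∂ν₀ = (∫ y, m y ∂ν₀) - ∫ y, y ∂ν₀ := integral_sub hm₀ hid₀
  have hsplit₁ : ∫ y, f y ∂ν₁ = (∫ y, m y ∂ν₁) - ∫ y, y ∂ν₁ := integral_sub hm₁ hid₁
  constructor
  · rw [hDID, hLDV]; rw [hsplit₀, hsplit₁] at hfle; linarith
  · intro μ₁
    rw [hDID, hLDV]; rw [hsplit₀, hsplit₁] at hfle; linarith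
end

section
/- Suppose m is differentiable with derivative m′(y) < 1 for all y ∈ ℝ (Stationarity), and ν₁((−∞, y]) ≤ ν₀((−∞, y]) for all y ∈ ℝ (Stochastic Monotonicity, version (b)). Then μ_DID ≥ μ_LDV; consequently, for any real number μ₁ (the mean treated outcome E(Y_{t+1} | G = 1)), the estimands τ_DID := μ₁ − μ_DID and τ_LDV := μ₁ − μ_LDV satisfy τ_DID ≤ τ_LDV. -/
open MeasureTheory Set

/-- Structure of down-sets in ℝ. -/
lemma downset_structure (S : Set ℝ) (hS : ∀ ⦃x y : ℝ⦄, y ≤ x → x ∈ S → y ∈ S) :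
    S = ∅ ∨ S = Set.univ ∨ (∃ c, S = Set.Iic c) ∨ (∃ c, S = Set.Iio c) := by
  rcases eq_empty_or_nonempty S with h | hne
  · exact Or.inl h
  by_cases hb : BddAbove S
  · set c := sSup S with hc
    by_cases hcS : c ∈ S
    · refine Or.inr (Or.inr (Or.inl ⟨c, ?_⟩))
      apply Subset.antisymm (fun x hx => le_csSup hb hx) (fun x hx => hS hx hcS)
    · refine Or.inr (Or.inr (Or.inr ⟨c, ?_⟩))
      apply Subset.antisymm
      · intro x hx
        exact lt_of_le_of_ne (le_csSup hb hx) (fun h => hcS (h ▸ hx : sSup S ∈ S))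
      · intro x hx
        obtain ⟨y, hyS, hxy⟩ := exists_lt_of_lt_csSup hne hx
        exact hS hxy.le hyS
  · refine Or.inr (Or.inl ?_)
    apply eq_univ_of_forall
    intro x
    obtain ⟨y, hyS, hxy⟩ := not_bddAbove_iff.1 hb x
    exact hS hxy.le hyS

lemma downset_meas (ν₀ ν₁ : Measure ℝ) [IsProbabilityMeasure ν₀] [IsProbabilityMeasure ν₁]
    (hmono : ∀ y : ℝ, ν₁ (Set.Iic y) ≤ ν₀ (Set.Iic y))
    (S : Set ℝ) (hS : ∀ ⦃x y : ℝ⦄, y ≤ x → x ∈ S → y ∈ S) :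
    ν₁ S ≤ ν₀ S := by
  rcases downset_structure S hS with h | h | ⟨c, h⟩ | ⟨c, h⟩
  · simp [h]
  · simp [h]
  · exact h ▸ hmono c
  · subst h
    have hU : Iio c = ⋃ n : ℕ, Iic (c - 1 / (n + 1)) := by
      ext x
      simp only [mem_Iio, mem_iUnion, mem_Iic]
      constructor
      · intro hx
        obtain ⟨n, hn⟩ := exists_nat_one_div_lt (sub_pos.2 hx)
        exact ⟨n, by linarith⟩
      · rintro ⟨n, hn⟩
        have : (0:ℝ) < 1 / (n + 1) := by positivity
        linarith
    have hdir : Monotone fun n : ℕ => Iic (c - 1 / (n + 1 : ℝ)) := by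
      intro a b hab
      apply Iic_subset_Iic.2
      have hab' : (a:ℝ) ≤ b := Nat.cast_le.2 hab
      have : (1:ℝ) / (b+1) ≤ 1 / (a+1) := by
        apply one_div_le_one_div_of_le (by positivity)
        linarith
      linarith
    rw [hU, (hdir.directed_le).measure_iUnion]
    apply iSup_le
    intro n
    exact (hmono _).trans (measure_mono (subset_iUnion (fun k : ℕ => Iic (c - 1 / (k + 1 : ℝ))) n))

lemma downset_measurable (S : Set ℝ) (hS : ∀ ⦃x y : ℝ⦄, y ≤ x → x ∈ S → y ∈ S) :
    MeasurableSet S := by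
  rcases downset_structure S hS with h | h | ⟨c, h⟩ | ⟨c, h⟩ <;> subst h <;>
    simp [measurableSet_Iic, measurableSet_Iio]

lemma upset_meas (ν₀ ν₁ : Measure ℝ) [IsProbabilityMeasure ν₀] [IsProbabilityMeasure ν₁]
    (hmono : ∀ y : ℝ, ν₁ (Set.Iic y) ≤ ν₀ (Set.Iic y))
    (U : Set ℝ) (hU : ∀ ⦃x y : ℝ⦄, x ≤ y → x ∈ U → y ∈ U) :
    ν₀ U ≤ ν₁ U := by
  have hS : ∀ ⦃x y : ℝ⦄, y ≤ x → x ∈ Uᶜ → y ∈ Uᶜ := fun x y hyx hx hy => hx (hU hyx hy)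
  have hmeas : MeasurableSet Uᶜ := downset_measurable _ hS
  have h := downset_meas ν₀ ν₁ hmono Uᶜ hS
  have e : U = Uᶜᶜ := (compl_compl U).symm
  rw [e, measure_compl hmeas (measure_ne_top _ _), measure_compl hmeas (measure_ne_top _ _)]
  simp only [measure_univ]
  exact tsub_le_tsub_left h 1

/-- FSD comparison of integrals of antitone functions. -/
lemma antitone_integral_le (ν₀ ν₁ : Measure ℝ) [IsProbabilityMeasure ν₀] [IsProbabilityMeasure ν₁]
    (hmono : ∀ y : ℝ, ν₁ (Set.Iic y) ≤ ν₀ (Set.Iic y))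
    (g : ℝ → ℝ) (hg : Antitone g) (h₀ : Integrable g ν₀) (h₁ : Integrable g ν₁) :
    ∫ y, g y ∂ν₁ ≤ ∫ y, g y ∂ν₀ := by
  have hgm : Measurable g := hg.measurable
  -- positive and negative parts
  set gp : ℝ → ℝ := fun y => max (g y) 0 with hgp
  set gn : ℝ → ℝ := fun y => max (-(g y)) 0 with hgn
  have hgp_anti : Antitone gp := fun a b hab => max_le_max (hg hab) le_rfl
  have hgn_mono : Monotone gn := fun a b hab => max_le_max (neg_le_neg (hg hab)) le_rfl
  have hofp : ∀ y, ENNReal.ofReal (g y) = ENNReal.ofReal (gp y) := by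
    intro y
    rcases le_total (g y) 0 with h | h
    · simp [hgp, max_eq_right h, ENNReal.ofReal_of_nonpos h]
    · simp [hgp, max_eq_left h]
  have hofn : ∀ y, ENNReal.ofReal (-(g y)) = ENNReal.ofReal (gn y) := by
    intro y
    rcases le_total (-(g y)) 0 with h | h
    · simp [hgn, max_eq_right h, ENNReal.ofReal_of_nonpos h]
    · simp [hgn, max_eq_left h]
  -- layer cake for positive part
  have layerP : ∀ (ν : Measure ℝ), ∫⁻ y, ENNReal.ofReal (g y) ∂ν
      = ∫⁻ t in Ioi (0:ℝ), ν {a : ℝ | t ≤ gp a} := by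
    intro ν
    simp_rw [hofp]
    exact lintegral_eq_lintegral_meas_le ν (Filter.Eventually.of_forall fun y => le_max_right _ _)
      (hgp_anti.measurable.aemeasurable)
  have layerN : ∀ (ν : Measure ℝ), ∫⁻ y, ENNReal.ofReal (-(g y)) ∂ν
      = ∫⁻ t in Ioi (0:ℝ), ν {a : ℝ | t ≤ gn a} := by
    intro ν
    simp_rw [hofn]
    exact lintegral_eq_lintegral_meas_le ν (Filter.Eventually.of_forall fun y => le_max_right _ _)
      (hgn_mono.measurable.aemeasurable)
  have hP : ∫⁻ y, ENNReal.ofReal (g y) ∂ν₁ ≤ ∫⁻ y, ENNReal.ofReal (g y) ∂ν₀ := by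
    rw [layerP ν₀, layerP ν₁]
    apply lintegral_mono
    intro t
    exact downset_meas ν₀ ν₁ hmono _ (fun x y hyx hx => le_trans hx (hgp_anti hyx))
  have hN : ∫⁻ y, ENNReal.ofReal (-(g y)) ∂ν₀ ≤ ∫⁻ y, ENNReal.ofReal (-(g y)) ∂ν₁ := by
    rw [layerN ν₀, layerN ν₁]
    apply lintegral_mono
    intro t
    exact upset_meas ν₀ ν₁ hmono _ (fun x y hxy hx => le_trans hx (hgn_mono hxy))
  -- finiteness
  have hfin : ∀ (ν : Measure ℝ), Integrable g ν →
      (∫⁻ y, ENNReal.ofReal (g y) ∂ν ≠ ⊤) ∧ (∫⁻ y, ENNReal.ofReal (-(g y)) ∂ν ≠ ⊤) := by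
    intro ν hint
    have hbound : ∀ y, ENNReal.ofReal (g y) ≤ (‖g y‖₊ : ENNReal) := by
      intro y
      rw [← enorm_eq_nnnorm, ← ofReal_norm]
      exact ENNReal.ofReal_le_ofReal (le_abs_self _)
    have hbound' : ∀ y, ENNReal.ofReal (-(g y)) ≤ (‖g y‖₊ : ENNReal) := by
      intro y
      rw [← enorm_eq_nnnorm, ← ofReal_norm]
      exact ENNReal.ofReal_le_ofReal ((neg_le_abs _))
    have hfi := hint.hasFiniteIntegral
    rw [HasFiniteIntegral] at hfi
    constructor
    · exact ne_top_of_le_ne_top hfi.ne (lintegral_mono hbound)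
    · exact ne_top_of_le_ne_top hfi.ne (lintegral_mono hbound')
  obtain ⟨hf₀p, hf₀n⟩ := hfin ν₀ h₀
  obtain ⟨hf₁p, hf₁n⟩ := hfin ν₁ h₁
  rw [integral_eq_lintegral_pos_part_sub_lintegral_neg_part h₀,
    integral_eq_lintegral_pos_part_sub_lintegral_neg_part h₁]
  have t1 : (∫⁻ y, ENNReal.ofReal (g y) ∂ν₁).toReal ≤ (∫⁻ y, ENNReal.ofReal (g y) ∂ν₀).toReal :=
    ENNReal.toReal_mono hf₀p hP
  have t2 : (∫⁻ y, ENNReal.ofReal (-(g y)) ∂ν₀).toReal ≤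
      (∫⁻ y, ENNReal.ofReal (-(g y)) ∂ν₁).toReal := ENNReal.toReal_mono hf₁n hN
  linarith

/-- Theorem 1, case (b): under Stationarity (`m` differentiable with `m′ < 1`) and
Stochastic Monotonicity (b) (`ν₁((−∞,y]) ≤ ν₀((−∞,y])`), the counterfactual means
satisfy `μ_DID ≥ μ_LDV`, hence `τ_DID ≤ τ_LDV` for any treated mean `μ₁`. -/
theorem bracketing_nonparametric_b (ν₀ ν₁ : Measure ℝ)
    [IsProbabilityMeasure ν₀] [IsProbabilityMeasure ν₁]
    (m : ℝ → ℝ) (hdiff : Differentiable ℝ m) (hderiv : ∀ y : ℝ, deriv m y < 1)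
    (hid₀ : Integrable (fun y : ℝ => y) ν₀) (hid₁ : Integrable (fun y : ℝ => y) ν₁)
    (hm₀ : Integrable m ν₀) (hm₁ : Integrable m ν₁)
    (hmono : ∀ y : ℝ, ν₁ (Set.Iic y) ≤ ν₀ (Set.Iic y))
    (μDID μLDV : ℝ)
    (hDID : μDID = (∫ y, y ∂ν₁) + (∫ y, m y ∂ν₀) - (∫ y, y ∂ν₀))
    (hLDV : μLDV = ∫ y, m y ∂ν₁) :
    μDID ≥ μLDV ∧ ∀ μ₁ : ℝ, μ₁ - μDID ≤ μ₁ - μLDV := by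
  set Δ : ℝ → ℝ := fun y => m y - y with hΔ
  have hΔdiff : Differentiable ℝ Δ := hdiff.sub differentiable_id
  have hΔderiv : ∀ y, deriv Δ y < 0 := by
    intro y
    have : deriv Δ y = deriv m y - 1 := by
      rw [hΔ]
      rw [deriv_fun_sub (hdiff y) differentiableAt_fun_id]
      simp
    rw [this]
    linarith [hderiv y]
  have hanti : Antitone Δ := (strictAnti_of_deriv_neg hΔderiv).antitone
  have hint₀ : Integrable Δ ν₀ := hm₀.sub hid₀
  have hint₁ : Integrable Δ ν₁ := hm₁.sub hid₁
  have key := antitone_integral_le ν₀ ν₁ hmono Δ hanti hint₀ hint₁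
  rw [show (fun y => Δ y) = Δ from rfl] at key
  have e₀ : ∫ y, Δ y ∂ν₀ = (∫ y, m y ∂ν₀) - ∫ y, y ∂ν₀ := integral_sub hm₀ hid₀
  have e₁ : ∫ y, Δ y ∂ν₁ = (∫ y, m y ∂ν₁) - ∫ y, y ∂ν₁ := integral_sub hm₁ hid₁
  rw [e₀, e₁] at key
  constructor
  · rw [hDID, hLDV]; linarith
  · intro μ₁
    rw [hDID, hLDV]; linarith
end

section
/- Suppose m is differentiable with derivative m′(y) < 1 for all y ∈ ℝ (Stationarity), and ν₁((−∞, y]) ≥ ν₀((−∞, y]) for all y ∈ ℝ (Stochastic Monotonicity, version (a)). If μ₁ ≥ 0 (the mean treated outcome E(Y_{t+1} | G = 1)) and μ_DID > 0, then the ratio estimands γ_DID := μ₁ / μ_DID and γ_LDV := μ₁ / μ_LDV satisfy γ_DID ≥ γ_LDV. -/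
open MeasureTheory

/-- A lower set in ℝ is `∅`, `univ`, `Iio c`, or `Iic c`. -/
lemma lowerSet_cases {S : Set ℝ} (h : IsLowerSet S) :
    S = ∅ ∨ S = Set.univ ∨ (∃ c, S = Set.Iio c) ∨ (∃ c, S = Set.Iic c) := by
  by_cases hne : S = ∅
  · exact Or.inl hne
  by_cases huniv : S = Set.univ
  · exact Or.inr (Or.inl huniv)
  refine Or.inr (Or.inr ?_)
  obtain ⟨b, hb⟩ : ∃ b, b ∉ S := by
    by_contra hc
    push_neg at hc
    exact huniv (Set.eq_univ_of_forall hc)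
  have hSne : S.Nonempty := Set.nonempty_iff_ne_empty.2 hne
  have hbdd : BddAbove S := ⟨b, fun a ha => by
    by_contra hab
    exact hb (h (le_of_not_ge hab) ha)⟩
  set c := sSup S with hc
  have hsub : S ⊆ Set.Iic c := fun a ha => le_csSup hbdd ha
  have hsub' : Set.Iio c ⊆ S := by
    intro x hx
    obtain ⟨a, haS, hxa⟩ := exists_lt_of_lt_csSup hSne hx
    exact h hxa.le haS
  by_cases hcS : c ∈ S
  · exact Or.inr ⟨c, Set.Subset.antisymm hsub (fun x hx => h hx hcS)⟩
  · refine Or.inl ⟨c, Set.Subset.antisymm ?_ hsub'⟩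
    intro x hx
    have hxle : x ≤ c := hsub hx
    exact lt_of_le_of_ne hxle (fun hxc => hcS (hxc ▸ hx))

lemma lowerSet_measurable {S : Set ℝ} (h : IsLowerSet S) : MeasurableSet S := by
  rcases lowerSet_cases h with h | h | ⟨c, h⟩ | ⟨c, h⟩ <;> subst h
  · exact MeasurableSet.empty
  · exact MeasurableSet.univ
  · exact measurableSet_Iio
  · exact measurableSet_Iic

/-- FSD on lower sets. -/
lemma lowerSet_meas_le (ν₀ ν₁ : Measure ℝ)
    [IsProbabilityMeasure ν₀] [IsProbabilityMeasure ν₁]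
    (hmono : ∀ y : ℝ, ν₀ (Set.Iic y) ≤ ν₁ (Set.Iic y))
    {S : Set ℝ} (h : IsLowerSet S) : ν₀ S ≤ ν₁ S := by
  rcases lowerSet_cases h with h | h | ⟨c, h⟩ | ⟨c, h⟩ <;> subst h
  · simp
  · simp
  · have hU : Set.Iio c = ⋃ n : ℕ, Set.Iic (c - ((n : ℝ) + 1)⁻¹) := by
      ext x
      simp only [Set.mem_Iio, Set.mem_iUnion, Set.mem_Iic]
      constructor
      · intro hx
        obtain ⟨n, hn⟩ := exists_nat_one_div_lt (sub_pos.2 hx)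
        refine ⟨n, ?_⟩
        rw [one_div] at hn
        linarith
      · intro ⟨n, hn⟩
        have : (0 : ℝ) < ((n : ℝ) + 1)⁻¹ := by positivity
        linarith
    have hmon : Monotone (fun n : ℕ => Set.Iic (c - ((n : ℝ) + 1)⁻¹)) := by
      intro a b hab
      apply Set.Iic_subset_Iic.2
      have : ((b : ℝ) + 1)⁻¹ ≤ ((a : ℝ) + 1)⁻¹ := by
        apply inv_anti₀ (by positivity)
        exact_mod_cast add_le_add_left (Nat.cast_le.2 hab) 1
      linarith
    rw [hU, (hmon.directed_le).measure_iUnion, (hmon.directed_le).measure_iUnion]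
    exact iSup_mono fun n => hmono _
  · exact hmono c

/-- FSD for nonnegative antitone functions. -/
lemma fsd_antitone_nonneg (ν₀ ν₁ : Measure ℝ)
    [IsProbabilityMeasure ν₀] [IsProbabilityMeasure ν₁]
    (hmono : ∀ y : ℝ, ν₀ (Set.Iic y) ≤ ν₁ (Set.Iic y))
    {f : ℝ → ℝ} (hf : Antitone f) (hnn : ∀ y, 0 ≤ f y)
    (h₀ : Integrable f ν₀) (h₁ : Integrable f ν₁) :
    ∫ y, f y ∂ν₀ ≤ ∫ y, f y ∂ν₁ := by
  have hnn₀ : 0 ≤ᵐ[ν₀] f := Filter.Eventually.of_forall hnn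
  have hnn₁ : 0 ≤ᵐ[ν₁] f := Filter.Eventually.of_forall hnn
  rw [integral_eq_lintegral_of_nonneg_ae hnn₀ h₀.aestronglyMeasurable,
    integral_eq_lintegral_of_nonneg_ae hnn₁ h₁.aestronglyMeasurable]
  apply ENNReal.toReal_mono h₁.lintegral_lt_top.ne
  rw [lintegral_eq_lintegral_meas_lt ν₀ hnn₀ h₀.aemeasurable,
    lintegral_eq_lintegral_meas_lt ν₁ hnn₁ h₁.aemeasurable]
  apply lintegral_mono
  intro t
  apply lowerSet_meas_le ν₀ ν₁ hmono
  intro x y hxy hy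
  exact lt_of_lt_of_le hy (hf hxy)

/-- Reverse FSD for nonnegative monotone functions. -/
lemma fsd_monotone_nonneg (ν₀ ν₁ : Measure ℝ)
    [IsProbabilityMeasure ν₀] [IsProbabilityMeasure ν₁]
    (hmono : ∀ y : ℝ, ν₀ (Set.Iic y) ≤ ν₁ (Set.Iic y))
    {f : ℝ → ℝ} (hf : Monotone f) (hnn : ∀ y, 0 ≤ f y)
    (h₀ : Integrable f ν₀) (h₁ : Integrable f ν₁) :
    ∫ y, f y ∂ν₁ ≤ ∫ y, f y ∂ν₀ := by
  have hnn₀ : 0 ≤ᵐ[ν₀] f := Filter.Eventually.of_forall hnn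
  have hnn₁ : 0 ≤ᵐ[ν₁] f := Filter.Eventually.of_forall hnn
  rw [integral_eq_lintegral_of_nonneg_ae hnn₀ h₀.aestronglyMeasurable,
    integral_eq_lintegral_of_nonneg_ae hnn₁ h₁.aestronglyMeasurable]
  apply ENNReal.toReal_mono h₀.lintegral_lt_top.ne
  rw [lintegral_eq_lintegral_meas_lt ν₀ hnn₀ h₀.aemeasurable,
    lintegral_eq_lintegral_meas_lt ν₁ hnn₁ h₁.aemeasurable]
  apply lintegral_mono
  intro t
  have hlow : IsLowerSet {a : ℝ | t < f a}ᶜ := by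
    intro x y hxy hy
    simp only [Set.mem_compl_iff, Set.mem_setOf_eq, not_lt] at *
    exact le_trans (hf hxy) hy
  have hmeas : MeasurableSet {a : ℝ | t < f a}ᶜ := lowerSet_measurable hlow
  have e₀ : ν₀ {a : ℝ | t < f a} = 1 - ν₀ {a : ℝ | t < f a}ᶜ := by
    have h := measure_compl hmeas (measure_ne_top ν₀ _)
    rw [compl_compl, measure_univ] at h
    exact h
  have e₁ : ν₁ {a : ℝ | t < f a} = 1 - ν₁ {a : ℝ | t < f a}ᶜ := by
    have h := measure_compl hmeas (measure_ne_top ν₁ _)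
    rw [compl_compl, measure_univ] at h
    exact h
  show ν₁ {a : ℝ | t < f a} ≤ ν₀ {a : ℝ | t < f a}
  rw [e₀, e₁]
  exact tsub_le_tsub_left (lowerSet_meas_le ν₀ ν₁ hmono hlow) 1

/-- FSD for antitone integrable functions. -/
lemma fsd_antitone (ν₀ ν₁ : Measure ℝ)
    [IsProbabilityMeasure ν₀] [IsProbabilityMeasure ν₁]
    (hmono : ∀ y : ℝ, ν₀ (Set.Iic y) ≤ ν₁ (Set.Iic y))
    {g : ℝ → ℝ} (hg : Antitone g)
    (h₀ : Integrable g ν₀) (h₁ : Integrable g ν₁) :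
    ∫ y, g y ∂ν₀ ≤ ∫ y, g y ∂ν₁ := by
  set gp : ℝ → ℝ := fun a => max (g a) 0 with hgp
  set gn : ℝ → ℝ := fun a => max (-g a) 0 with hgn
  have hdecomp : ∀ a, g a = gp a - gn a := by
    intro a
    simp only [hgp, hgn]
    rcases le_total (g a) 0 with h | h
    · simp [max_eq_right h, max_eq_left (neg_nonneg.2 h)]
    · simp [max_eq_left h, max_eq_right (neg_nonpos.2 h)]
  have hgp_anti : Antitone gp := fun a b hab => max_le_max (hg hab) le_rfl
  have hgn_mono : Monotone gn := fun a b hab => max_le_max (neg_le_neg (hg hab)) le_rfl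
  have hgp₀ : Integrable gp ν₀ := h₀.pos_part
  have hgp₁ : Integrable gp ν₁ := h₁.pos_part
  have hgn₀ : Integrable gn ν₀ := h₀.neg.pos_part
  have hgn₁ : Integrable gn ν₁ := h₁.neg.pos_part
  have e₀ : ∫ y, g y ∂ν₀ = (∫ y, gp y ∂ν₀) - ∫ y, gn y ∂ν₀ := by
    rw [← integral_sub hgp₀ hgn₀]
    exact integral_congr_ae (Filter.Eventually.of_forall hdecomp)
  have e₁ : ∫ y, g y ∂ν₁ = (∫ y, gp y ∂ν₁) - ∫ y, gn y ∂ν₁ := by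
    rw [← integral_sub hgp₁ hgn₁]
    exact integral_congr_ae (Filter.Eventually.of_forall hdecomp)
  rw [e₀, e₁]
  have h1 := fsd_antitone_nonneg ν₀ ν₁ hmono hgp_anti (fun y => le_max_right _ _) hgp₀ hgp₁
  have h2 := fsd_monotone_nonneg ν₀ ν₁ hmono hgn_mono (fun y => le_max_right _ _) hgn₀ hgn₁
  linarith

/-- Theorem 1, ratio version, case (a): under Stationarity and Stochastic
Monotonicity (a), if `μ₁ ≥ 0` and `μ_DID > 0` then `γ_DID = μ₁/μ_DID ≥ μ₁/μ_LDV = γ_LDV`. -/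
theorem bracketing_ratio_a (ν₀ ν₁ : Measure ℝ)
    [IsProbabilityMeasure ν₀] [IsProbabilityMeasure ν₁]
    (m : ℝ → ℝ) (hdiff : Differentiable ℝ m) (hderiv : ∀ y : ℝ, deriv m y < 1)
    (hid₀ : Integrable (fun y : ℝ => y) ν₀) (hid₁ : Integrable (fun y : ℝ => y) ν₁)
    (hm₀ : Integrable m ν₀) (hm₁ : Integrable m ν₁)
    (hmono : ∀ y : ℝ, ν₀ (Set.Iic y) ≤ ν₁ (Set.Iic y))
    (μDID μLDV : ℝ)
    (hDID : μDID = (∫ y, y ∂ν₁) + (∫ y, m y ∂ν₀) - (∫ y, y ∂ν₀))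
    (hLDV : μLDV = ∫ y, m y ∂ν₁)
    (μ₁ : ℝ) (hμ₁ : 0 ≤ μ₁) (hpos : 0 < μDID) :
    μ₁ / μDID ≥ μ₁ / μLDV := by
  set Δ : ℝ → ℝ := fun y => m y - y with hΔdef
  have hΔanti : Antitone Δ := by
    apply StrictAnti.antitone
    apply strictAnti_of_deriv_neg
    intro x
    have hd : deriv Δ x = deriv m x - 1 := by
      rw [hΔdef]
      simp [deriv_fun_sub (hdiff x) differentiableAt_fun_id]
    rw [hd]
    linarith [hderiv x]
  have hΔ₀ : Integrable Δ ν₀ := hm₀.sub hid₀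
  have hΔ₁ : Integrable Δ ν₁ := hm₁.sub hid₁
  have hfsd : ∫ y, Δ y ∂ν₀ ≤ ∫ y, Δ y ∂ν₁ := fsd_antitone ν₀ ν₁ hmono hΔanti hΔ₀ hΔ₁
  have e₀ : ∫ y, Δ y ∂ν₀ = (∫ y, m y ∂ν₀) - ∫ y, y ∂ν₀ := integral_sub hm₀ hid₀
  have e₁ : ∫ y, Δ y ∂ν₁ = (∫ y, m y ∂ν₁) - ∫ y, y ∂ν₁ := integral_sub hm₁ hid₁
  have hle : μDID ≤ μLDV := by
    rw [hDID, hLDV]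
    linarith
  exact div_le_div_of_nonneg_left hμ₁ hpos hle
end

section
/- Suppose m is differentiable with derivative m′(y) < 1 for all y ∈ ℝ (Stationarity), and ν₁((−∞, y]) ≤ ν₀((−∞, y]) for all y ∈ ℝ (Stochastic Monotonicity, version (b)). If μ₁ ≥ 0 (the mean treated outcome E(Y_{t+1} | G = 1)) and μ_LDV > 0, then the ratio estimands γ_DID := μ₁ / μ_DID and γ_LDV := μ₁ / μ_LDV satisfy γ_DID ≤ γ_LDV. -/
open MeasureTheory

/-- A lower set of reals has smaller `ν₁`-measure than `ν₀`-measure when the CDF of `ν₁`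
is dominated by that of `ν₀`. -/
lemma meas_lowerSet_le (ν₀ ν₁ : Measure ℝ)
    [IsProbabilityMeasure ν₀] [IsProbabilityMeasure ν₁]
    (hmono : ∀ y : ℝ, ν₁ (Set.Iic y) ≤ ν₀ (Set.Iic y))
    (S : Set ℝ) (hS : IsLowerSet S) : ν₁ S ≤ ν₀ S := by
  rcases S.eq_empty_or_nonempty with rfl | hne
  · simp
  by_cases hub : BddAbove S
  · set a := sSup S with ha
    have hsub : S ⊆ Set.Iic a := fun x hx => le_csSup hub hx
    have hlo : Set.Iio a ⊆ S := by
      intro x hx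
      obtain ⟨b, hb, hxb⟩ := exists_lt_of_lt_csSup hne hx
      exact hS hxb.le hb
    by_cases haS : a ∈ S
    · have hEq : S = Set.Iic a := Set.Subset.antisymm hsub (hS.Iic_subset haS)
      rw [hEq]; exact hmono a
    · have hEq : S = Set.Iio a := by
        refine Set.Subset.antisymm (fun x hx => ?_) hlo
        have hxa : x ≤ a := hsub hx
        have hxne : x ≠ a := fun h => haS (h ▸ hx)
        exact Set.mem_Iio.mpr (lt_of_le_of_ne hxa hxne)
      have hU : Set.Iio a = ⋃ n : ℕ, Set.Iic (a - 1 / (n + 1)) := by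
        ext x
        simp only [Set.mem_Iio, Set.mem_iUnion, Set.mem_Iic]
        constructor
        · intro hx
          obtain ⟨n, hn⟩ := exists_nat_one_div_lt (sub_pos.mpr hx)
          exact ⟨n, by linarith⟩
        · rintro ⟨n, hn⟩
          have hpos : (0 : ℝ) < 1 / (n + 1) := by positivity
          linarith
      have hd : Directed (· ⊆ ·) (fun n : ℕ => Set.Iic (a - 1 / ((n : ℝ) + 1))) := by
        apply Monotone.directed_le
        intro i j hij
        apply Set.Iic_subset_Iic.mpr
        have : (1 : ℝ) / (j + 1) ≤ 1 / (i + 1) := by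
          apply one_div_le_one_div_of_le (by positivity)
          exact_mod_cast Nat.add_le_add_right hij 1
        linarith
      rw [hEq, hU, Directed.measure_iUnion hd, Directed.measure_iUnion hd]
      exact iSup_mono fun n => hmono _
  · have hEq : S = Set.univ := by
      apply Set.eq_univ_of_forall
      intro x
      obtain ⟨b, hb, hxb⟩ := not_bddAbove_iff.mp hub x
      exact hS hxb.le hb
    simp [hEq]

/-- An upper measurable set of reals has larger `ν₁`-measure than `ν₀`-measure. -/
lemma meas_upperSet_ge (ν₀ ν₁ : Measure ℝ)
    [IsProbabilityMeasure ν₀] [IsProbabilityMeasure ν₁]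
    (hmono : ∀ y : ℝ, ν₁ (Set.Iic y) ≤ ν₀ (Set.Iic y))
    (S : Set ℝ) (hS : IsUpperSet S) (hSm : MeasurableSet S) : ν₀ S ≤ ν₁ S := by
  have hc := meas_lowerSet_le ν₀ ν₁ hmono Sᶜ hS.compl
  have h₀ : ν₀ Sᶜ = 1 - ν₀ S := by
    rw [measure_compl hSm (measure_ne_top _ _), measure_univ]
  have h₁ : ν₁ Sᶜ = 1 - ν₁ S := by
    rw [measure_compl hSm (measure_ne_top _ _), measure_univ]
  rw [h₀, h₁] at hc
  exact (ENNReal.sub_le_sub_iff_left prob_le_one ENNReal.one_ne_top).mp hc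

/-- Nonnegative antitone functions have smaller integral w.r.t. `ν₁`. -/
lemma integral_antitone_nonneg_le (ν₀ ν₁ : Measure ℝ)
    [IsProbabilityMeasure ν₀] [IsProbabilityMeasure ν₁]
    (hmono : ∀ y : ℝ, ν₁ (Set.Iic y) ≤ ν₀ (Set.Iic y))
    (f : ℝ → ℝ) (hf : Antitone f) (hf0 : ∀ x, 0 ≤ f x)
    (hint₀ : Integrable f ν₀) (hint₁ : Integrable f ν₁) :
    ∫ y, f y ∂ν₁ ≤ ∫ y, f y ∂ν₀ := by
  have hmeas : Measurable f := hf.measurable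
  have hL : ∀ ν : Measure ℝ, ∫⁻ ω, ENNReal.ofReal (f ω) ∂ν
      = ∫⁻ t in Set.Ioi (0:ℝ), ν {a : ℝ | t < f a} := fun ν =>
    lintegral_eq_lintegral_meas_lt ν (Filter.Eventually.of_forall hf0) hmeas.aemeasurable
  have hle : ∫⁻ ω, ENNReal.ofReal (f ω) ∂ν₁ ≤ ∫⁻ ω, ENNReal.ofReal (f ω) ∂ν₀ := by
    rw [hL ν₁, hL ν₀]
    apply lintegral_mono
    intro t
    refine meas_lowerSet_le ν₀ ν₁ hmono _ ?_
    intro a b hba ha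
    exact lt_of_lt_of_le ha (hf hba)
  rw [integral_eq_lintegral_of_nonneg_ae (Filter.Eventually.of_forall hf0)
      hint₁.aestronglyMeasurable,
    integral_eq_lintegral_of_nonneg_ae (Filter.Eventually.of_forall hf0)
      hint₀.aestronglyMeasurable]
  exact ENNReal.toReal_mono hint₀.lintegral_lt_top.ne hle

/-- Nonnegative monotone functions have larger integral w.r.t. `ν₁`. -/
lemma integral_monotone_nonneg_ge (ν₀ ν₁ : Measure ℝ)
    [IsProbabilityMeasure ν₀] [IsProbabilityMeasure ν₁]
    (hmono : ∀ y : ℝ, ν₁ (Set.Iic y) ≤ ν₀ (Set.Iic y))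
    (g : ℝ → ℝ) (hg : Monotone g) (hg0 : ∀ x, 0 ≤ g x)
    (hint₀ : Integrable g ν₀) (hint₁ : Integrable g ν₁) :
    ∫ y, g y ∂ν₀ ≤ ∫ y, g y ∂ν₁ := by
  have hmeas : Measurable g := hg.measurable
  have hL : ∀ ν : Measure ℝ, ∫⁻ ω, ENNReal.ofReal (g ω) ∂ν
      = ∫⁻ t in Set.Ioi (0:ℝ), ν {a : ℝ | t < g a} := fun ν =>
    lintegral_eq_lintegral_meas_lt ν (Filter.Eventually.of_forall hg0) hmeas.aemeasurable
  have hle : ∫⁻ ω, ENNReal.ofReal (g ω) ∂ν₀ ≤ ∫⁻ ω, ENNReal.ofReal (g ω) ∂ν₁ := by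
    rw [hL ν₁, hL ν₀]
    apply lintegral_mono
    intro t
    refine meas_upperSet_ge ν₀ ν₁ hmono _ ?_ ?_
    · intro a b hab ha
      exact lt_of_lt_of_le ha (hg hab)
    · exact measurableSet_lt measurable_const hmeas
  rw [integral_eq_lintegral_of_nonneg_ae (Filter.Eventually.of_forall hg0)
      hint₁.aestronglyMeasurable,
    integral_eq_lintegral_of_nonneg_ae (Filter.Eventually.of_forall hg0)
      hint₀.aestronglyMeasurable]
  exact ENNReal.toReal_mono hint₁.lintegral_lt_top.ne hle

/-- Antitone integrable functions have smaller integral w.r.t. `ν₁`. -/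
lemma integral_antitone_le (ν₀ ν₁ : Measure ℝ)
    [IsProbabilityMeasure ν₀] [IsProbabilityMeasure ν₁]
    (hmono : ∀ y : ℝ, ν₁ (Set.Iic y) ≤ ν₀ (Set.Iic y))
    (f : ℝ → ℝ) (hf : Antitone f)
    (hint₀ : Integrable f ν₀) (hint₁ : Integrable f ν₁) :
    ∫ y, f y ∂ν₁ ≤ ∫ y, f y ∂ν₀ := by
  set fp : ℝ → ℝ := fun y => max (f y) 0 with hfp
  set fm : ℝ → ℝ := fun y => max (-(f y)) 0 with hfm
  have hfpA : Antitone fp := fun a b hab => max_le_max (hf hab) le_rfl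
  have hfmM : Monotone fm := fun a b hab => max_le_max (neg_le_neg (hf hab)) le_rfl
  have hsplit : ∀ y, f y = fp y - fm y := fun y =>
    (max_zero_sub_max_neg_zero_eq_self (f y)).symm
  have hp₀ : Integrable fp ν₀ := hint₀.pos_part
  have hp₁ : Integrable fp ν₁ := hint₁.pos_part
  have hm₀ : Integrable fm ν₀ := hint₀.neg.pos_part
  have hm₁ : Integrable fm ν₁ := hint₁.neg.pos_part
  have h₁ : ∫ y, f y ∂ν₁ = (∫ y, fp y ∂ν₁) - ∫ y, fm y ∂ν₁ := by
    rw [← integral_sub hp₁ hm₁]; exact integral_congr_ae (Filter.Eventually.of_forall hsplit)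
  have h₀ : ∫ y, f y ∂ν₀ = (∫ y, fp y ∂ν₀) - ∫ y, fm y ∂ν₀ := by
    rw [← integral_sub hp₀ hm₀]; exact integral_congr_ae (Filter.Eventually.of_forall hsplit)
  have hP := integral_antitone_nonneg_le ν₀ ν₁ hmono fp hfpA (fun x => le_max_right _ _) hp₀ hp₁
  have hM := integral_monotone_nonneg_ge ν₀ ν₁ hmono fm hfmM (fun x => le_max_right _ _) hm₀ hm₁
  rw [h₀, h₁]; linarith

/-- Theorem 1, ratio version, case (b): under Stationarity and Stochastic
Monotonicity (b), if `μ₁ ≥ 0` and `μ_LDV > 0` then `γ_DID = μ₁/μ_DID ≤ μ₁/μ_LDV = γ_LDV`. -/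
theorem bracketing_ratio_b (ν₀ ν₁ : Measure ℝ)
    [IsProbabilityMeasure ν₀] [IsProbabilityMeasure ν₁]
    (m : ℝ → ℝ) (hdiff : Differentiable ℝ m) (hderiv : ∀ y : ℝ, deriv m y < 1)
    (hid₀ : Integrable (fun y : ℝ => y) ν₀) (hid₁ : Integrable (fun y : ℝ => y) ν₁)
    (hm₀ : Integrable m ν₀) (hm₁ : Integrable m ν₁)
    (hmono : ∀ y : ℝ, ν₁ (Set.Iic y) ≤ ν₀ (Set.Iic y))
    (μDID μLDV : ℝ)
    (hDID : μDID = (∫ y, y ∂ν₁) + (∫ y, m y ∂ν₀) - (∫ y, y ∂ν₀))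
    (hLDV : μLDV = ∫ y, m y ∂ν₁)
    (μ₁ : ℝ) (hμ₁ : 0 ≤ μ₁) (hpos : 0 < μLDV) :
    μ₁ / μDID ≤ μ₁ / μLDV := by
  set Δ : ℝ → ℝ := fun y => m y - y with hΔ
  have hΔdiff : Differentiable ℝ Δ := hdiff.sub differentiable_id
  have hΔanti : Antitone Δ := by
    apply StrictAnti.antitone
    apply strictAnti_of_deriv_neg
    intro x
    have : deriv Δ x = deriv m x - 1 := by
      rw [hΔ]
      rw [deriv_fun_sub (hdiff x) differentiableAt_fun_id]
      simp
    rw [this]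
    linarith [hderiv x]
  have hΔ₀ : Integrable Δ ν₀ := hm₀.sub hid₀
  have hΔ₁ : Integrable Δ ν₁ := hm₁.sub hid₁
  have hkey := integral_antitone_le ν₀ ν₁ hmono Δ hΔanti hΔ₀ hΔ₁
  have e₁ : ∫ y, Δ y ∂ν₁ = (∫ y, m y ∂ν₁) - ∫ y, y ∂ν₁ := integral_sub hm₁ hid₁
  have e₀ : ∫ y, Δ y ∂ν₀ = (∫ y, m y ∂ν₀) - ∫ y, y ∂ν₀ := integral_sub hm₀ hid₀
  have hle : μLDV ≤ μDID := by
    rw [hDID, hLDV]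
    rw [e₁, e₀] at hkey
    linarith
  gcongr
end

section
/- Let p₀, p₁ ∈ [0,1] and m₀, m₁ ∈ [0,1], and define μ_DID := (1 − p₁) + [p₀·m₀ + (1 − p₀)·m₁] − (1 − p₀) and μ_LDV := p₁·m₀ + (1 − p₁)·m₁. If p₁ ≥ p₀, then μ_DID ≤ μ_LDV; consequently, for any real number μ₁, the estimands τ_DID := μ₁ − μ_DID and τ_LDV := μ₁ − μ_LDV satisfy τ_DID ≥ τ_LDV. (In particular, for a binary outcome the stationarity condition holds automatically and the bracketing direction is determined by the sign of pr(Y_t = 0 | G = 1) − pr(Y_t = 0 | G = 0).) -/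
/-- Binary-outcome specialization of the bracketing theorem: with
`μ_DID = (1 − p₁) + (p₀ m₀ + (1 − p₀) m₁) − (1 − p₀)` and
`μ_LDV = p₁ m₀ + (1 − p₁) m₁`, if `p₁ ≥ p₀` then `μ_DID ≤ μ_LDV`, and hence
`τ_DID = μ₁ − μ_DID ≥ μ₁ − μ_LDV = τ_LDV` for every `μ₁`. -/
theorem bracketing_binary (p₀ p₁ m₀ m₁ : ℝ)
    (hp₀ : p₀ ∈ Set.Icc (0 : ℝ) 1) (hp₁ : p₁ ∈ Set.Icc (0 : ℝ) 1)
    (hm₀ : m₀ ∈ Set.Icc (0 : ℝ) 1) (hm₁ : m₁ ∈ Set.Icc (0 : ℝ) 1)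
    (μDID μLDV : ℝ)
    (hDID : μDID = (1 - p₁) + (p₀ * m₀ + (1 - p₀) * m₁) - (1 - p₀))
    (hLDV : μLDV = p₁ * m₀ + (1 - p₁) * m₁)
    (hmono : p₀ ≤ p₁) :
    μDID ≤ μLDV ∧ ∀ μ₁ : ℝ, μ₁ - μDID ≥ μ₁ - μLDV := by
  obtain ⟨h0, h1⟩ := hm₀
  obtain ⟨h2, h3⟩ := hm₁
  have key : μDID ≤ μLDV := by
    rw [hDID, hLDV]
    nlinarith [mul_nonneg (sub_nonneg.2 hmono) (by linarith : (0:ℝ) ≤ 1 + m₀ - m₁)]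
  exact ⟨key, fun μ₁ => by linarith⟩
end

section
/- Let ν₀ and ν₁ be probability measures on ℕ and m : ℕ → ℝ a function satisfying m(k+1) − m(k) < 1 for every k ∈ ℕ (the discrete stationarity condition). Assume the identity function k ↦ k and m are integrable with respect to both ν₀ and ν₁, and that ν₁({0, 1, …, k}) ≥ ν₀({0, 1, …, k}) for every k ∈ ℕ. Then μ_DID := ∫ k ν₁(dk) + ∫ m(k) ν₀(dk) − ∫ k ν₀(dk) and μ_LDV := ∫ m(k) ν₁(dk) satisfy μ_DID ≤ μ_LDV. -/
open MeasureTheory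
lemma integral_min_eq (ν : Measure ℕ) [IsProbabilityMeasure ν] (g : ℕ → ℝ) (N : ℕ) :
    ∫ k, g (min k N) ∂ν
      = g 0 - ∑ j ∈ Finset.range N, (g j - g (j+1)) * (ν (Set.Ioi j)).toReal := by
  have hpt : (fun k => g (min k N))
      = fun k => g 0 - ∑ j ∈ Finset.range N, (Set.Ioi j).indicator (fun _ => g j - g (j+1)) k := by
    funext k
    have h1 : ∀ j, (Set.Ioi j).indicator (fun _ => g j - g (j+1)) k
        = if j < k then g j - g (j+1) else 0 := by
      intro j; simp [Set.indicator_apply, Set.mem_Ioi]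
    simp only [h1, Finset.sum_ite, Finset.sum_const_zero, add_zero]
    have h2 : (Finset.range N).filter (fun j => j < k) = Finset.range (min N k) := by
      ext j; simp [Nat.lt_min, and_comm]
    rw [h2, Finset.sum_range_sub' g]
    have : min N k = min k N := min_comm N k
    rw [this]; ring
  rw [hpt]
  rw [integral_sub (integrable_const _)]
  · rw [integral_const, integral_finset_sum]
    · simp only [integral_indicator_const _ (measurableSet_Ioi), smul_eq_mul]
      simp [mul_comm]
      rfl
    · intro j _
      exact (integrable_const _).indicator measurableSet_Ioi
  · exact integrable_finset_sum _ (fun j _ => (integrable_const _).indicator measurableSet_Ioi)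

lemma tendsto_integral_min (ν : Measure ℕ) [IsProbabilityMeasure ν] (g : ℕ → ℝ)
    (hanti : Antitone g) (hint : Integrable g ν) :
    Filter.Tendsto (fun N => ∫ k, g (min k N) ∂ν) Filter.atTop (nhds (∫ k, g k ∂ν)) := by
  refine tendsto_integral_of_dominated_convergence (fun k => |g 0| + |g k|)
    (fun N => (measurable_from_nat).aestronglyMeasurable) ((integrable_const _).add hint.abs) ?_ ?_
  · intro N
    refine Filter.Eventually.of_forall (fun k => ?_)
    have h1 : g (min k N) ≤ g 0 := hanti (Nat.zero_le _)
    have h2 : g k ≤ g (min k N) := hanti (min_le_left k N)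
    simp only [Real.norm_eq_abs]; rw [abs_le]
    constructor
    · have := neg_abs_le (g k); linarith [abs_nonneg (g 0)]
    · have := le_abs_self (g 0); linarith [abs_nonneg (g k)]
  · refine Filter.Eventually.of_forall (fun k => ?_)
    refine Filter.Tendsto.congr' ?_ tendsto_const_nhds
    filter_upwards [Filter.eventually_ge_atTop k] with N hN
    rw [min_eq_left hN]

/-- Count-outcome form of the bracketing theorem: for probability measures on `ℕ`
with `m(k+1) − m(k) < 1` (discrete stationarity) and `ν₁({0,…,k}) ≥ ν₀({0,…,k})`
for every `k` (stochastic monotonicity), we have `μ_DID ≤ μ_LDV`. -/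
theorem bracketing_count (ν₀ ν₁ : Measure ℕ)
    [IsProbabilityMeasure ν₀] [IsProbabilityMeasure ν₁]
    (m : ℕ → ℝ) (hstat : ∀ k : ℕ, m (k + 1) - m k < 1)
    (hid₀ : Integrable (fun k : ℕ => (k : ℝ)) ν₀)
    (hid₁ : Integrable (fun k : ℕ => (k : ℝ)) ν₁)
    (hm₀ : Integrable m ν₀) (hm₁ : Integrable m ν₁)
    (hmono : ∀ k : ℕ, ν₀ (Set.Iic k) ≤ ν₁ (Set.Iic k))
    (μDID μLDV : ℝ)
    (hDID : μDID = (∫ k, (k : ℝ) ∂ν₁) + (∫ k, m k ∂ν₀) - (∫ k, (k : ℝ) ∂ν₀))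
    (hLDV : μLDV = ∫ k, m k ∂ν₁) :
    μDID ≤ μLDV := by
  set g : ℕ → ℝ := fun k => m k - k with hg
  have hgstep : ∀ j : ℕ, 0 ≤ g j - g (j+1) := by
    intro j
    have := hstat j
    simp only [hg]
    push_cast
    linarith
  have hanti : Antitone g :=
    antitone_nat_of_succ_le (fun j => by linarith [hgstep j])
  have hgint₀ : Integrable g ν₀ := hm₀.sub hid₀
  have hgint₁ : Integrable g ν₁ := hm₁.sub hid₁
  have key : ∫ k, g k ∂ν₀ ≤ ∫ k, g k ∂ν₁ := by
    have hstep : ∀ N, ∫ k, g (min k N) ∂ν₀ ≤ ∫ k, g (min k N) ∂ν₁ := by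
      intro N
      rw [integral_min_eq, integral_min_eq]
      have htail : ∀ j : ℕ, (ν₁ (Set.Ioi j)).toReal ≤ (ν₀ (Set.Ioi j)).toReal := by
        intro j
        have h0 : ∀ (ν : Measure ℕ) [IsProbabilityMeasure ν],
            ν (Set.Ioi j) = 1 - ν (Set.Iic j) := by
          intro ν _
          have : Set.Ioi j = (Set.Iic j)ᶜ := by ext x; simp
          rw [this, measure_compl measurableSet_Iic (measure_ne_top _ _), measure_univ]
        rw [h0 ν₀, h0 ν₁]
        have h1 : ν₀ (Set.Iic j) ≤ 1 := prob_le_one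
        have h2 : ν₁ (Set.Iic j) ≤ 1 := prob_le_one
        apply ENNReal.toReal_mono (by finiteness)
        exact tsub_le_tsub_left (hmono j) 1
      have : ∑ j ∈ Finset.range N, (g j - g (j+1)) * (ν₁ (Set.Ioi j)).toReal
          ≤ ∑ j ∈ Finset.range N, (g j - g (j+1)) * (ν₀ (Set.Ioi j)).toReal := by
        apply Finset.sum_le_sum
        intro j _
        exact mul_le_mul_of_nonneg_left (htail j) (hgstep j)
      linarith
    exact le_of_tendsto_of_tendsto' (tendsto_integral_min ν₀ g hanti hgint₀)
      (tendsto_integral_min ν₁ g hanti hgint₁) hstep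
  have e₀ : ∫ k, g k ∂ν₀ = (∫ k, m k ∂ν₀) - ∫ k, (k : ℝ) ∂ν₀ := integral_sub hm₀ hid₀
  have e₁ : ∫ k, g k ∂ν₁ = (∫ k, m k ∂ν₁) - ∫ k, (k : ℝ) ∂ν₁ := integral_sub hm₁ hid₁
  rw [hDID, hLDV]
  linarith
end

section
/- Let (Ω, ℱ, μ) be a probability space, A ∈ ℱ with 0 < μ(A) < 1, 𝒢 ⊆ ℱ a sub-σ-algebra (generated by the lagged outcome Y_t), and let Y_{t+1}, Y⁰ : Ω → ℝ be integrable random variables with Y_{t+1}(ω) = Y⁰(ω) for all ω ∈ Aᶜ. Assume mean ignorability: the conditional expectation of Y⁰ given the σ-algebra 𝒢 ⊔ σ({A}) equals the conditional expectation of Y⁰ given 𝒢, μ-almost everywhere; and overlap: μ[1_{Aᶜ} | 𝒢] > 0 μ-almost everywhere. Then E[1_A · Y⁰] = E[ 1_A · ( μ[1_{Aᶜ} · Y_{t+1} | 𝒢] / μ[1_{Aᶜ} | 𝒢] ) ]; dividing both sides by μ(A), this says the counterfactual mean μ₀ = E{Y_{t+1}(0) | G = 1} equals E{ E(Y_{t+1}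 | G = 0, Y_t) | G = 1 }, the lagged-dependent-variable identification formula. -/
open MeasureTheory


private lemma aux_ind_int {Ω : Type*} {m : MeasurableSpace Ω} {μ : MeasureTheory.Measure Ω}
    {f : Ω → ℝ} {s : Set Ω} (hf : MeasureTheory.Integrable f μ) (hs : MeasurableSet[m] s) :
    MeasureTheory.Integrable (s.indicator f) μ := hf.indicator hs

private lemma aux_int_ind {Ω : Type*} {m : MeasurableSpace Ω} (μ : MeasureTheory.Measure Ω)
    {f : Ω → ℝ} {s : Set Ω} (hs : MeasurableSet[m] s) :
    ∫ x, s.indicator f x ∂μ = ∫ x in s, f x ∂μ := MeasureTheory.integral_indicator hs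

/-- Identification of the counterfactual mean under ignorability: if `Yₜ₊₁ = Y⁰` on
the control group `Aᶜ`, mean ignorability `μ[Y⁰ | 𝒢 ⊔ σ(A)] =ᵐ μ[Y⁰ | 𝒢]` holds and
overlap `μ[1_{Aᶜ} | 𝒢] > 0` a.e. holds, then
`E[1_A · Y⁰] = E[1_A · (μ[1_{Aᶜ}·Yₜ₊₁ | 𝒢] / μ[1_{Aᶜ} | 𝒢])]`. -/
theorem ldv_identification {Ω : Type*} [m0 : MeasurableSpace Ω] (μ : Measure Ω)
    [IsProbabilityMeasure μ] (A : Set Ω) (hA : MeasurableSet A)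
    (hA0 : 0 < μ A) (hA1 : μ A < 1)
    (G : MeasurableSpace Ω) (hG : G ≤ m0)
    (Yt1 Y0 : Ω → ℝ) (hYt1 : Integrable Yt1 μ) (hY0 : Integrable Y0 μ)
    (hcons : ∀ ω ∈ Aᶜ, Yt1 ω = Y0 ω)
    (hig : μ[Y0 | G ⊔ MeasurableSpace.generateFrom {A}] =ᵐ[μ] μ[Y0 | G])
    (hoverlap : ∀ᵐ ω ∂μ, 0 < (μ[Aᶜ.indicator (fun _ => (1 : ℝ)) | G]) ω) :
    ∫ ω, A.indicator Y0 ω ∂μ =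
      ∫ ω, A.indicator (fun ω' =>
        (μ[Aᶜ.indicator Yt1 | G]) ω' / (μ[Aᶜ.indicator (fun _ => (1 : ℝ)) | G]) ω') ω ∂μ := by
  have hAm' : MeasurableSet[G ⊔ MeasurableSpace.generateFrom {A}] A :=
    (le_sup_right : MeasurableSpace.generateFrom {A} ≤ G ⊔ MeasurableSpace.generateFrom {A}) _
      (MeasurableSpace.measurableSet_generateFrom (Set.mem_singleton A))
  have hm' : G ⊔ MeasurableSpace.generateFrom {A} ≤ m0 :=
    sup_le hG (MeasurableSpace.generateFrom_le (by rintro s rfl; exact hA))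
  have hAcm' : MeasurableSet[G ⊔ MeasurableSpace.generateFrom {A}] Aᶜ := hAm'.compl
  set g := μ[Y0 | G] with hgdef
  set I := μ[Aᶜ.indicator (fun _ => (1 : ℝ)) | G] with hIdef
  have hind : Aᶜ.indicator Yt1 = Aᶜ.indicator Y0 := by
    funext ω
    by_cases h : ω ∈ Aᶜ
    · simp [Set.indicator_of_mem h, hcons ω h]
    · simp [Set.indicator_of_notMem h]
  have hindeq : Aᶜ.indicator Y0 = (Aᶜ.indicator (fun _ => (1 : ℝ))) * Y0 := by
    funext ω
    by_cases h : ω ∈ Aᶜ <;> simp [Set.indicator_of_mem, Set.indicator_of_notMem, h]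
  have hsm : StronglyMeasurable[G ⊔ MeasurableSpace.generateFrom {A}] (Aᶜ.indicator (fun _ => (1 : ℝ))) :=
    (@stronglyMeasurable_const Ω ℝ (G ⊔ MeasurableSpace.generateFrom {A}) _ (1:ℝ)).indicator hAcm'
  have hY0ind : Integrable (Aᶜ.indicator (fun _ => (1 : ℝ)) * Y0) μ := by
    rw [← hindeq]; exact aux_ind_int (m := m0) hY0 hA.compl
  -- pull out at m'
  have h1 : μ[Aᶜ.indicator (fun _ => (1 : ℝ)) * Y0 | G ⊔ MeasurableSpace.generateFrom {A}] =ᵐ[μ]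
      Aᶜ.indicator (fun _ => (1 : ℝ)) * μ[Y0 | G ⊔ MeasurableSpace.generateFrom {A}] :=
    condExp_mul_of_stronglyMeasurable_left hsm hY0ind hY0
  have h2 : Aᶜ.indicator (fun _ => (1 : ℝ)) * μ[Y0 | G ⊔ MeasurableSpace.generateFrom {A}] =ᵐ[μ]
      Aᶜ.indicator (fun _ => (1 : ℝ)) * g := by
    filter_upwards [hig] with ω hω
    simp only [Pi.mul_apply, hω, hgdef]
  -- tower
  have htower : μ[Aᶜ.indicator Y0 | G] =ᵐ[μ] μ[μ[Aᶜ.indicator Y0 | G ⊔ MeasurableSpace.generateFrom {A}] | G] :=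
    (condExp_condExp_of_le le_sup_left hm').symm
  have hgsm : StronglyMeasurable[G] g := stronglyMeasurable_condExp (f := Y0)
  have hbd : ∀ ω, ‖Aᶜ.indicator (fun _ => (1 : ℝ)) ω‖ ≤ 1 := by
    intro ω
    by_cases h : ω ∈ Aᶜ <;> simp [Set.indicator_of_mem, Set.indicator_of_notMem, h]
  have hintI : Integrable (Aᶜ.indicator (fun _ => (1 : ℝ))) μ :=
    aux_ind_int (m := m0) (integrable_const (1 : ℝ)) hA.compl
  have hintg : Integrable (g * Aᶜ.indicator (fun _ => (1 : ℝ))) μ := by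
    rw [mul_comm]
    exact (integrable_condExp (f := Y0)).bdd_mul (c := 1)
      ((stronglyMeasurable_const.indicator hA.compl).aestronglyMeasurable) (Filter.Eventually.of_forall hbd)
  -- pull out at G
  have h3 : μ[g * Aᶜ.indicator (fun _ => (1 : ℝ)) | G] =ᵐ[μ] g * I :=
    condExp_mul_of_stronglyMeasurable_left hgsm hintg hintI
  -- combine: μ[1_{Aᶜ}·Yt1 | G] =ᵐ g * I
  have hkey : μ[Aᶜ.indicator Yt1 | G] =ᵐ[μ] g * I := by
    rw [hind, hindeq]
    calc μ[Aᶜ.indicator (fun _ => (1 : ℝ)) * Y0 | G]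
        =ᵐ[μ] μ[μ[Aᶜ.indicator (fun _ => (1 : ℝ)) * Y0 | G ⊔ MeasurableSpace.generateFrom {A}] | G] :=
          (condExp_condExp_of_le le_sup_left hm').symm
      _ =ᵐ[μ] μ[Aᶜ.indicator (fun _ => (1 : ℝ)) * g | G] :=
          condExp_congr_ae (h1.trans h2)
      _ =ᵐ[μ] μ[g * Aᶜ.indicator (fun _ => (1 : ℝ)) | G] := by rw [mul_comm]
      _ =ᵐ[μ] g * I := h3
  -- ratio equals g a.e.
  have hratio : (fun ω => (μ[Aᶜ.indicator Yt1 | G]) ω / I ω) =ᵐ[μ] g := by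
    filter_upwards [hkey, hoverlap] with ω h1' h2'
    rw [h1']
    exact mul_div_cancel_right₀ (g ω) (ne_of_gt h2')
  -- rewrite both sides as set integrals of g
  have hRHS : ∫ ω, A.indicator (fun ω' =>
        (μ[Aᶜ.indicator Yt1 | G]) ω' / I ω') ω ∂μ = ∫ ω, A.indicator g ω ∂μ := by
    refine integral_congr_ae ?_
    filter_upwards [hratio] with ω hω
    by_cases h : ω ∈ A
    · simp [Set.indicator_of_mem h, hω]
    · simp [Set.indicator_of_notMem h]
  have hLHS : ∫ ω, A.indicator Y0 ω ∂μ = ∫ ω, A.indicator g ω ∂μ := by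
    rw [aux_int_ind (m := m0) μ hA, aux_int_ind (m := m0) μ hA]
    calc ∫ ω in A, Y0 ω ∂μ = ∫ ω in A, (μ[Y0 | G ⊔ MeasurableSpace.generateFrom {A}]) ω ∂μ :=
          (setIntegral_condExp hm' hY0 hAm').symm
      _ = ∫ ω in A, g ω ∂μ :=
          integral_congr_ae (ae_restrict_of_ae hig)
  rw [hLHS, hRHS]
end
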